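/- Existence for the generalized Tzitzéica equation under coefficient comparison: let G be a connected finite graph, h₁, h₂ : V → ℝ strictly positive, A, B > 0. If A·max_V h₁ < B·min_V h₂, then there exists u : V → ℝ with u(x) > 0 for all x solving −Δu + h₁(x)·e^{Au}(e^{Au} − 1) + h₂(x)·e^{−Bu}(e^{−Bu} − 1) = 0 on V. -/

import Mathlib

open Finset Real Topology

noncomputable def graphLap {V : Type*} [Fintype V] (μ : V → ℝ) (w : V → V → ℝ)
    (u : V → ℝ) (x : V) : ℝ :=
  (1 / μ x) * ∑ y, w x y * (u y - u x)

noncomputable def gradSq {V : Type*} [Fintype V] (μ : V → ℝ) (w : V → V → ℝ)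
    (u : V → ℝ) (x : V) : ℝ :=
  (1 / (2 * μ x)) * ∑ y, w x y * (u y - u x) ^ 2

def GraphConnected {V : Type*} (w : V → V → ℝ) : Prop :=
  ∀ x y : V, Relation.ReflTransGen (fun a b => 0 < w a b) x y

noncomputable def Fpot (A B p q t : ℝ) : ℝ :=
  p * (Real.exp (2*A*t)/(2*A) - Real.exp (A*t)/A)
    + q * (Real.exp (-B*t)/B - Real.exp (-(2*B)*t)/(2*B))

noncomputable def fng (A B p q t : ℝ) : ℝ :=
  p * Real.exp (A*t) * (Real.exp (A*t) - 1) + q * Real.exp (-B*t) * (Real.exp (-B*t) - 1)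

lemma fng_deriv (A B p q : ℝ) (hA : A ≠ 0) (hB : B ≠ 0) (s c : ℝ) :
    HasDerivAt (fun t : ℝ => Fpot A B p q (s + t * c)) (fng A B p q s * c) 0 := by
  have L : HasDerivAt (fun t : ℝ => s + t * c) c 0 := by
    simpa using ((hasDerivAt_id (0:ℝ)).mul_const c).const_add s
  have E : ∀ k : ℝ, HasDerivAt (fun t : ℝ => Real.exp (k * (s + t * c)))
      (Real.exp (k * s) * (k * c)) 0 := by
    intro k
    have := ((L.const_mul k).exp)
    simpa using this
  have h1 := (((E (2*A)).div_const (2*A)).fun_sub ((E A).div_const A)).const_mul p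
  have h2 := (((E (-B)).div_const B).fun_sub ((E (-(2*B))).div_const (2*B))).const_mul q
  have := h1.fun_add h2
  refine this.congr_deriv ?_
  symm
  have e1 : Real.exp (2*A*s) = Real.exp (A*s) * Real.exp (A*s) := by
    rw [← Real.exp_add]; ring_nf
  have e2 : Real.exp (-(2*B)*s) = Real.exp (-B*s) * Real.exp (-B*s) := by
    rw [← Real.exp_add]; ring_nf
  simp only [fng]
  rw [e1, e2]
  field_simp
  ring

lemma right_deriv_nonneg {g : ℝ → ℝ} {d ε : ℝ} (hg : HasDerivAt g d 0) (hε : 0 < ε)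
    (h : ∀ t ∈ Set.Ioo (0:ℝ) ε, g 0 ≤ g t) : 0 ≤ d := by
  have hs : Filter.Tendsto (slope g 0) (𝓝[>] 0) (𝓝 d) :=
    (hasDerivAt_iff_tendsto_slope.mp hg).mono_left
      (nhdsWithin_mono _ (by intro t ht; exact ne_of_gt ht))
  refine ge_of_tendsto hs ?_
  filter_upwards [Ioo_mem_nhdsGT_of_mem (by constructor <;> simp [hε] : (0:ℝ) ∈ Set.Ico 0 ε)]
    with t ht
  have := h t ht
  rw [slope_def_field]
  have ht0 : 0 < t := ht.1
  exact div_nonneg (by linarith) (by simpa using ht0.le)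

lemma left_deriv_nonpos {g : ℝ → ℝ} {d ε : ℝ} (hg : HasDerivAt g d 0) (hε : 0 < ε)
    (h : ∀ t ∈ Set.Ioo (-ε) (0:ℝ), g 0 ≤ g t) : d ≤ 0 := by
  have hs : Filter.Tendsto (slope g 0) (𝓝[<] 0) (𝓝 d) :=
    (hasDerivAt_iff_tendsto_slope.mp hg).mono_left
      (nhdsWithin_mono _ (by intro t ht; exact ne_of_lt ht))
  refine le_of_tendsto hs ?_
  filter_upwards [Ioo_mem_nhdsLT_of_mem (by constructor <;> simp [hε] : (0:ℝ) ∈ Set.Ioc (-ε) 0)]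
    with t ht
  have := h t ht
  rw [slope_def_field]
  have ht0 : t < 0 := ht.2
  exact div_nonpos_of_nonneg_of_nonpos (by linarith) (by simpa using ht0.le)

theorem gen_tzitzeica_existence {V : Type*} [Fintype V] [Nonempty V]
    (μ : V → ℝ) (w : V → V → ℝ)
    (hμ : ∀ x, 0 < μ x) (hsym : ∀ x y, w x y = w y x) (hw : ∀ x y, 0 ≤ w x y)
    (hconn : GraphConnected w)
    (h₁ h₂ : V → ℝ) (hh₁ : ∀ x, 0 < h₁ x) (hh₂ : ∀ x, 0 < h₂ x)
    (A B : ℝ) (hA : 0 < A) (hB : 0 < B)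
    (hcomp : A * Finset.univ.sup' Finset.univ_nonempty h₁
      < B * Finset.univ.inf' Finset.univ_nonempty h₂) :
    ∃ u : V → ℝ, (∀ x, 0 < u x) ∧
      ∀ x, -graphLap μ w u x
        + h₁ x * Real.exp (A * u x) * (Real.exp (A * u x) - 1)
        + h₂ x * Real.exp (-B * u x) * (Real.exp (-B * u x) - 1) = 0 := by
  classical
  set M := Finset.univ.sup' Finset.univ_nonempty h₁ with hMdef
  set m := Finset.univ.inf' Finset.univ_nonempty h₂ with hmdef
  set m₁ := Finset.univ.inf' Finset.univ_nonempty h₁ with hm₁def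
  set M₂ := Finset.univ.sup' Finset.univ_nonempty h₂ with hM₂def
  have hMle : ∀ x, h₁ x ≤ M := fun x => Finset.le_sup' h₁ (Finset.mem_univ x)
  have hmle : ∀ x, m ≤ h₂ x := fun x => Finset.inf'_le h₂ (Finset.mem_univ x)
  have hm₁le : ∀ x, m₁ ≤ h₁ x := fun x => Finset.inf'_le h₁ (Finset.mem_univ x)
  have hM₂le : ∀ x, h₂ x ≤ M₂ := fun x => Finset.le_sup' h₂ (Finset.mem_univ x)
  have hM : 0 < M := lt_of_lt_of_le (hh₁ (Classical.arbitrary V)) (hMle _)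
  have hm : 0 < m := by
    obtain ⟨z, _, hz⟩ := Finset.exists_mem_eq_inf' Finset.univ_nonempty h₂
    rw [hmdef, hz]; exact hh₂ z
  have hm₁ : 0 < m₁ := by
    obtain ⟨z, _, hz⟩ := Finset.exists_mem_eq_inf' Finset.univ_nonempty h₁
    rw [hm₁def, hz]; exact hh₁ z
  have hM₂ : 0 < M₂ := lt_of_lt_of_le (hh₂ (Classical.arbitrary V)) (hM₂le _)
  clear_value M m m₁ M₂
  have hAM : 0 < A * M := mul_pos hA hM
  set r := (B * m) / (A * M) with hrdef
  have hr : 1 < r := (one_lt_div hAM).mpr hcomp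
  clear_value r
  set δ := Real.log r / (4 * (A + B)) with hδdef
  have hAB : 0 < A + B := by linarith
  have hδ : 0 < δ := div_pos (Real.log_pos hr) (by linarith)
  clear_value δ
  -- key smallness: exp (2*(A+B)*δ) < r
  have hkey : Real.exp (2 * (A + B) * δ) < r := by
    have h1 : 2 * (A + B) * δ = Real.log r / 2 := by
      rw [hδdef]; field_simp; ring
    have h2 : Real.log r / 2 < Real.log r := by
      have := Real.log_pos hr; linarith
    calc Real.exp (2 * (A + B) * δ) = Real.exp (Real.log r / 2) := by rw [h1]
      _ < Real.exp (Real.log r) := Real.exp_lt_exp.mpr h2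
      _ = r := Real.exp_log (by positivity)
  -- fng is negative at δ
  have fneg : ∀ x, fng A B (h₁ x) (h₂ x) δ < 0 := by
    intro x
    set a := Real.exp (A * δ) with hadef
    set b := Real.exp (-B * δ) with hbdef
    clear_value a b
    have ha0 : 0 < a := hadef ▸ Real.exp_pos _
    have hb0 : 0 < b := hbdef ▸ Real.exp_pos _
    have ha1 : 1 ≤ a := by
      rw [hadef]; exact Real.one_le_exp (by positivity)
    have hb1 : b ≤ 1 := by
      rw [hbdef]; exact Real.exp_le_one_iff.mpr (by nlinarith)
    have hup : a - 1 ≤ A * δ * a := by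
      have h := Real.add_one_le_exp (-(A*δ))
      have : Real.exp (-(A*δ)) * a = 1 := by
        rw [hadef, ← Real.exp_add]; simp
      nlinarith [Real.exp_pos (-(A*δ))]
    have hlow : B * δ * b ≤ 1 - b := by
      have h := Real.add_one_le_exp (B*δ)
      have : Real.exp (B*δ) * b = 1 := by
        rw [hbdef, ← Real.exp_add]; simp
      nlinarith [Real.exp_pos (B*δ)]
    have hmain : A * M * (a * a) < B * m * (b * b) := by
      have haa : a * a = Real.exp (2*A*δ) := by
        rw [hadef, ← Real.exp_add]; ring_nf
      have hbb : b * b = Real.exp (-(2*B)*δ) := by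
        rw [hbdef, ← Real.exp_add]; ring_nf
      have hprod : Real.exp (2*A*δ) * Real.exp (2*B*δ) = Real.exp (2*(A+B)*δ) := by
        rw [← Real.exp_add]; ring_nf
      have hinv : Real.exp (-(2*B)*δ) * Real.exp (2*B*δ) = 1 := by
        rw [← Real.exp_add]; simp
      have hkey2 : A * M * Real.exp (2*(A+B)*δ) < B * m := by
        have h' : Real.exp (2*(A+B)*δ) < B * m / (A * M) := by rw [← hrdef]; exact hkey
        have h2 := (lt_div_iff₀ hAM).mp h'
        linarith [h2, (by ring : A * M * Real.exp (2*(A+B)*δ)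
          = Real.exp (2*(A+B)*δ) * (A * M))]
      rw [haa, hbb]
      have hE : 0 < Real.exp (2*B*δ) := Real.exp_pos _
      rw [← mul_lt_mul_iff_of_pos_right hE]
      have hR : B * m * Real.exp (-(2*B)*δ) * Real.exp (2*B*δ) = B * m := by
        rw [mul_assoc, hinv, mul_one]
      rw [hR, show A * M * Real.exp (2*A*δ) * Real.exp (2*B*δ)
          = A * M * (Real.exp (2*A*δ) * Real.exp (2*B*δ)) by ring, hprod]
      exact hkey2
    have e1 : h₁ x * a * (a - 1) ≤ A * M * (a * a) * δ := by
      have t1 : h₁ x * a * (a - 1) ≤ M * a * (a - 1) :=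
        mul_le_mul_of_nonneg_right (mul_le_mul_of_nonneg_right (hMle x) ha0.le) (by linarith)
      have t2 : M * a * (a - 1) ≤ M * a * (A * δ * a) :=
        mul_le_mul_of_nonneg_left hup (by positivity)
      have t3 : M * a * (A * δ * a) = A * M * (a * a) * δ := by ring
      linarith
    have e2 : h₂ x * b * (b - 1) ≤ - (B * m * (b * b) * δ) := by
      have t1 : m * b * (1 - b) ≤ h₂ x * b * (1 - b) :=
        mul_le_mul_of_nonneg_right (mul_le_mul_of_nonneg_right (hmle x) hb0.le) (by linarith)
      have t2 : m * b * (B * δ * b) ≤ m * b * (1 - b) :=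
        mul_le_mul_of_nonneg_left hlow (by positivity)
      have t3 : m * b * (B * δ * b) = B * m * (b * b) * δ := by ring
      have t4 : h₂ x * b * (b - 1) = -(h₂ x * b * (1 - b)) := by ring
      linarith
    have hfeq : fng A B (h₁ x) (h₂ x) δ = h₁ x * a * (a-1) + h₂ x * b * (b-1) := by
      rw [fng, hadef, hbdef]
    rw [hfeq]
    have t5 : A * M * (a * a) * δ - B * m * (b * b) * δ < 0 := by
      have s1 : A * M * (a * a) - B * m * (b * b) < 0 := sub_neg.mpr hmain
      have s2 := mul_neg_of_neg_of_pos s1 hδ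
      have s3 : (A * M * (a * a) - B * m * (b * b)) * δ
          = A * M * (a * a) * δ - B * m * (b * b) * δ := by ring
      linarith
    linarith
  -- choose β
  set β := max (δ + 1) (Real.log (2 + M₂/m₁) / A) with hβdef
  have hβδ : δ < β := lt_of_lt_of_le (by linarith) (le_max_left _ _)
  have hβ0 : 0 < β := lt_trans hδ hβδ
  have hβlog : Real.log (2 + M₂/m₁) / A ≤ β := le_max_right _ _
  clear_value β
  have fpos : ∀ x, 0 < fng A B (h₁ x) (h₂ x) β := by
    intro x
    set a := Real.exp (A * β) with hadef
    set b := Real.exp (-B * β) with hbdef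
    clear_value a b
    have ha0 : 0 < a := hadef ▸ Real.exp_pos _
    have hb0 : 0 < b := hbdef ▸ Real.exp_pos _
    have hb1 : b < 1 := by
      rw [hbdef]; apply Real.exp_lt_one_iff.mpr; nlinarith
    have hc0 : 0 < M₂ / m₁ := by positivity
    have ha : 2 + M₂/m₁ ≤ a := by
      have h2 : Real.log (2 + M₂/m₁) ≤ A * β := by
        have h1 := hβlog
        rw [div_le_iff₀ hA] at h1; linarith
      calc 2 + M₂/m₁ = Real.exp (Real.log (2 + M₂/m₁)) := (Real.exp_log (by linarith)).symm
        _ ≤ Real.exp (A * β) := Real.exp_le_exp.mpr h2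
        _ = a := by rw [hadef]
    have hM2 : M₂ / m₁ * m₁ = M₂ := div_mul_cancel₀ _ (ne_of_gt hm₁)
    have : fng A B (h₁ x) (h₂ x) β = h₁ x * a * (a-1) + h₂ x * b * (b-1) := by
      rw [fng, hadef, hbdef]
    rw [this]
    have step1 : (2 + M₂/m₁) * (1 + M₂/m₁) ≤ a * (a - 1) := by
      apply mul_le_mul ha (by linarith) (by positivity) (by linarith)
    have t1 : m₁ * ((2 + M₂/m₁) * (1 + M₂/m₁)) ≤ h₁ x * (a * (a - 1)) := by
      apply mul_le_mul (hm₁le x) step1 (by positivity)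
      exact (hh₁ x).le
    have hbb : b * (1 - b) < 1 := by
      have : b * (1 - b) ≤ b * 1 := mul_le_mul_of_nonneg_left (by linarith) hb0.le
      linarith
    have t2' : h₂ x * (b * (1 - b)) < M₂ := by
      calc h₂ x * (b * (1 - b)) < h₂ x * 1 := mul_lt_mul_of_pos_left hbb (hh₂ x)
        _ = h₂ x := mul_one _
        _ ≤ M₂ := hM₂le x
    have t2 : -M₂ < h₂ x * b * (b - 1) := by
      have hre : h₂ x * b * (b - 1) = -(h₂ x * (b * (1 - b))) := by ring
      linarith
    have hexp : m₁ * ((2 + M₂/m₁) * (1 + M₂/m₁))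
        = 2*m₁ + 3*(M₂/m₁*m₁) + (M₂/m₁)*(M₂/m₁*m₁) := by ring
    have hcc : 0 ≤ (M₂/m₁) * M₂ := mul_nonneg hc0.le hM₂.le
    have hre1 : h₁ x * a * (a-1) = h₁ x * (a*(a-1)) := by ring
    rw [hM2] at hexp
    linarith
  -- the energy functional
  set J : (V → ℝ) → ℝ := fun v =>
    (1/4) * ∑ a, ∑ b, w a b * (v b - v a)^2 + ∑ a, μ a * Fpot A B (h₁ a) (h₂ a) (v a)
    with hJdef
  have hJc : Continuous J := by
    apply Continuous.add
    · apply Continuous.mul continuous_const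
      apply continuous_finset_sum; intro a _
      apply continuous_finset_sum; intro b _
      exact continuous_const.mul (((continuous_apply b).sub (continuous_apply a)).pow 2)
    · apply continuous_finset_sum; intro a _
      apply Continuous.mul continuous_const
      unfold Fpot
      fun_prop
  set K : Set (V → ℝ) := Set.pi Set.univ (fun _ => Set.Icc δ β) with hKdef
  have hKc : IsCompact K := isCompact_univ_pi (fun _ => isCompact_Icc)
  have hKne : K.Nonempty := ⟨fun _ => δ, fun z _ => ⟨le_refl δ, le_of_lt hβδ⟩⟩
  obtain ⟨u, huK, humin⟩ := hKc.exists_isMinOn hKne hJc.continuousOn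
  have hub : ∀ z, δ ≤ u z ∧ u z ≤ β := fun z => huK z (Set.mem_univ z)
  -- derivative of t ↦ J (u + t · 1ₓ)
  have hD : ∀ x : V, HasDerivAt (fun t => J (fun z => u z + t * (if z = x then (1:ℝ) else 0)))
      ((∑ y, w x y * (u x - u y)) + μ x * fng A B (h₁ x) (h₂ x) (u x)) 0 := by
    intro x
    set ex : V → ℝ := fun z => if z = x then (1:ℝ) else 0 with hexdef
    have hquad : HasDerivAt
        (fun t => (1/4) * ∑ a, ∑ b, w a b * ((u b + t * ex b) - (u a + t * ex a))^2)
        ((1/4) * ∑ a, ∑ b, w a b * (2 * (u b - u a) * (ex b - ex a))) 0 := by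
      apply HasDerivAt.const_mul
      apply HasDerivAt.fun_sum; intro a _
      apply HasDerivAt.fun_sum; intro b _
      have base : HasDerivAt (fun t : ℝ => (u b - u a) + t * (ex b - ex a)) (ex b - ex a) 0 := by
        simpa using ((hasDerivAt_id (0:ℝ)).mul_const (ex b - ex a)).const_add (u b - u a)
      have := (base.fun_pow 2).const_mul (w a b)
      refine (this.congr_of_eventuallyEq (Filter.Eventually.of_forall fun t => ?_)).congr_deriv ?_
      · ring
      · push_cast; ring
    have hpot : HasDerivAt
        (fun t => ∑ a, μ a * Fpot A B (h₁ a) (h₂ a) (u a + t * ex a))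
        (∑ a, μ a * (fng A B (h₁ a) (h₂ a) (u a) * ex a)) 0 := by
      apply HasDerivAt.fun_sum; intro a _
      exact (fng_deriv A B (h₁ a) (h₂ a) (ne_of_gt hA) (ne_of_gt hB) (u a) (ex a)).const_mul (μ a)
    have hsum := hquad.fun_add hpot
    have hfun : (fun t => (1/4) * ∑ a, ∑ b, w a b * ((u b + t * ex b) - (u a + t * ex a))^2
        + ∑ a, μ a * Fpot A B (h₁ a) (h₂ a) (u a + t * ex a))
        = (fun t => J (fun z => u z + t * ex z)) := by
      funext t; rw [hJdef]
    rw [hfun] at hsum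
    refine hsum.congr_deriv ?_
    have hpart2 : ∑ a, μ a * (fng A B (h₁ a) (h₂ a) (u a) * ex a)
        = μ x * fng A B (h₁ x) (h₂ x) (u x) := by
      have hc : ∀ a ∈ Finset.univ, μ a * (fng A B (h₁ a) (h₂ a) (u a) * ex a)
          = if a = x then μ a * fng A B (h₁ a) (h₂ a) (u a) else 0 := by
        intro a _
        rw [hexdef]; by_cases h : a = x <;> simp [h]
      rw [Finset.sum_congr rfl hc, Finset.sum_ite_eq' Finset.univ x
        (fun a => μ a * fng A B (h₁ a) (h₂ a) (u a))]
      simp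
    have hpart1 : ∑ a, ∑ b, w a b * (2 * (u b - u a) * (ex b - ex a))
        = 4 * ∑ y, w x y * (u x - u y) := by
      have hsplit : ∀ a ∈ Finset.univ, ∑ b, w a b * (2 * (u b - u a) * (ex b - ex a))
          = (∑ b, (2 * w a b * (u b - u a)) * ex b)
            - (∑ b, 2 * w a b * (u b - u a)) * ex a := by
        intro a _
        rw [Finset.sum_mul, ← Finset.sum_sub_distrib]
        apply Finset.sum_congr rfl; intro b _; ring
      rw [Finset.sum_congr rfl hsplit, Finset.sum_sub_distrib]
      have hA1 : ∑ a, ∑ b, (2 * w a b * (u b - u a)) * ex b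
          = ∑ a, 2 * w a x * (u x - u a) := by
        apply Finset.sum_congr rfl; intro a _
        have hc : ∀ b ∈ Finset.univ, (2 * w a b * (u b - u a)) * ex b
            = if b = x then 2 * w a b * (u b - u a) else 0 := by
          intro b _; rw [hexdef]; by_cases h : b = x <;> simp [h]
        rw [Finset.sum_congr rfl hc, Finset.sum_ite_eq' Finset.univ x
          (fun b => 2 * w a b * (u b - u a))]
        simp
      have hA2 : ∑ a, (∑ b, 2 * w a b * (u b - u a)) * ex a
          = ∑ b, 2 * w x b * (u b - u x) := by
        have hc : ∀ a ∈ Finset.univ, (∑ b, 2 * w a b * (u b - u a)) * ex a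
            = if a = x then ∑ b, 2 * w a b * (u b - u a) else 0 := by
          intro a _; rw [hexdef]; by_cases h : a = x <;> simp [h]
        rw [Finset.sum_congr rfl hc, Finset.sum_ite_eq' Finset.univ x
          (fun a => ∑ b, 2 * w a b * (u b - u a))]
        simp
      rw [hA1, hA2, Finset.mul_sum, ← Finset.sum_sub_distrib]
      apply Finset.sum_congr rfl; intro y _
      rw [hsym y x]; ring
    rw [hpart1, hpart2]
    ring
  -- basic facts about perturbations
  have hg0 : ∀ x : V, (fun z => u z + (0:ℝ) * (if z = x then (1:ℝ) else 0)) = u := by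
    intro x; funext z; simp
  have hfeas : ∀ (x : V) (t : ℝ), δ ≤ u x + t → u x + t ≤ β →
      (fun z => u z + t * (if z = x then (1:ℝ) else 0)) ∈ K := by
    intro x t h1 h2
    rw [hKdef]
    refine Set.mem_univ_pi.mpr fun z => ?_
    show u z + t * (if z = x then (1:ℝ) else 0) ∈ Set.Icc δ β
    by_cases hz : z = x
    · rw [if_pos hz, mul_one, hz]; exact ⟨h1, h2⟩
    · rw [if_neg hz, mul_zero, add_zero]; exact hub z
  have hmin' : ∀ v ∈ K, J u ≤ J v := fun v hv => isMinOn_iff.mp humin v hv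
  -- strict interior
  have hlt : ∀ x, δ < u x ∧ u x < β := by
    intro x
    constructor
    · rcases eq_or_lt_of_le (hub x).1 with heq | h
      swap
      · exact h
      exfalso
      have hS : (∑ y, w x y * (u x - u y)) ≤ 0 := by
        apply Finset.sum_nonpos; intro y _
        apply mul_nonpos_of_nonneg_of_nonpos (hw x y)
        have := (hub y).1; rw [← heq]; linarith
      have hprod : μ x * fng A B (h₁ x) (h₂ x) (u x) < 0 := by
        apply mul_neg_of_pos_of_neg (hμ x)
        rw [← heq]; exact fneg x
      have h0 := right_deriv_nonneg (hD x) (show (0:ℝ) < β - δ by linarith) ?_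
      · linarith
      · intro t ht
        rw [hg0 x]
        apply hmin'
        apply hfeas x t (by rw [← heq]; linarith [ht.1]) (by rw [← heq]; linarith [ht.2])
    · rcases eq_or_lt_of_le (hub x).2 with heq | h
      swap
      · exact h
      exfalso
      have hS : 0 ≤ (∑ y, w x y * (u x - u y)) := by
        apply Finset.sum_nonneg; intro y _
        apply mul_nonneg (hw x y)
        have := (hub y).2; rw [heq]; linarith
      have hprod : 0 < μ x * fng A B (h₁ x) (h₂ x) (u x) := by
        apply mul_pos (hμ x)
        rw [heq]; exact fpos x
      have h0 := left_deriv_nonpos (hD x) (show (0:ℝ) < β - δ by linarith) ?_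
      · linarith
      · intro t ht
        rw [hg0 x]
        apply hmin'
        apply hfeas x t (by linarith [ht.2, (hub x).1, hβδ, ht.1]) (by rw [heq]; linarith [ht.2])
  refine ⟨u, fun x => lt_of_lt_of_le hδ (hub x).1, fun x => ?_⟩
  have hx := hlt x
  have hDz : (∑ y, w x y * (u x - u y)) + μ x * fng A B (h₁ x) (h₂ x) (u x) = 0 := by
    have hge := right_deriv_nonneg (hD x) (show (0:ℝ) < β - u x by linarith [hx.2]) ?_
    · have hle := left_deriv_nonpos (hD x) (show (0:ℝ) < u x - δ by linarith [hx.1]) ?_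
      · linarith
      · intro t ht
        rw [hg0 x]
        apply hmin'
        apply hfeas x t (by linarith [ht.1]) (by linarith [ht.2, (hub x).2])
    · intro t ht
      rw [hg0 x]
      apply hmin'
      apply hfeas x t (by linarith [ht.1, (hub x).1]) (by linarith [ht.2])
  have hsumneg : ∑ y, w x y * (u y - u x) = - ∑ y, w x y * (u x - u y) := by
    rw [← Finset.sum_neg_distrib]
    apply Finset.sum_congr rfl; intro y _; ring
  have hμx : μ x ≠ 0 := ne_of_gt (hμ x)
  calc -graphLap μ w u x + h₁ x * Real.exp (A * u x) * (Real.exp (A * u x) - 1)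
        + h₂ x * Real.exp (-B * u x) * (Real.exp (-B * u x) - 1)
      = (1/μ x) * ((∑ y, w x y * (u x - u y)) + μ x * fng A B (h₁ x) (h₂ x) (u x)) := by
        rw [graphLap, hsumneg, fng]
        field_simp
        ring
    _ = 0 := by rw [hDz, mul_zero]
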